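/- arXiv:1105.1899 — 4 statements merged into one kernel-verified Lean document; each statement's English description precedes it below -/
import Mathlib

section
/- Let K ⊆ S(A) be a compact convex subset of the state space of a finite-dimensional C*-algebra A, and let Q = {λσ : λ ≥ 0, σ ∈ K} be the convex cone generated by K. Then K is a section of S(A) if and only if for all a, b ∈ Q with b ≤ a one has a − b ∈ Q. -/
open scoped BigOperators Pointwise

namespace GenCh

/-- A finite-dimensional C*-algebra `⊕ⱼ B(Hⱼ)`, represented as the algebra of
block-diagonal operators: an element assigns to each block index `i` a matrix
acting on the (finite-dimensional) Hilbert space with orthonormal basis `d i`. -/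
abbrev PiMat (ι : Type) (d : ι → Type) : Type := ∀ i, Matrix (d i) (d i) ℂ

variable {ι : Type} [Fintype ι] [DecidableEq ι] {d : ι → Type}
  [∀ i, Fintype (d i)] [∀ i, DecidableEq (d i)]
variable {κ : Type} [Fintype κ] [DecidableEq κ] {e : κ → Type}
  [∀ j, Fintype (e j)] [∀ j, DecidableEq (e j)]

/-- A positive element of a (finite-dimensional) C*-algebra: `a = b* b`. -/
def IsPosEl {A : Type} [NonUnitalSemiring A] [StarRing A] (a : A) : Prop :=
  ∃ b, a = star b * b

/-- The (un-normalized) trace `Tr` on `⊕ⱼ B(Hⱼ)`. -/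
noncomputable def trL : PiMat ι d →ₗ[ℂ] ℂ where
  toFun a := ∑ i, (a i).trace
  map_add' a b := by simp [Matrix.trace_add, Finset.sum_add_distrib]
  map_smul' c a := by simp [Matrix.trace_smul, Finset.mul_sum, smul_eq_mul]

/-- Complete positivity of a linear map between (finite-dimensional) C*-algebras:
for every `n`, the induced map on `n × n` matrices (i.e. `id_{B(ℂⁿ)} ⊗ Φ`)
preserves positivity. -/
def IsCP {A B : Type} [NonUnitalSemiring A] [StarRing A] [Module ℂ A]
    [NonUnitalSemiring B] [StarRing B] [Module ℂ B] (Φ : A →ₗ[ℂ] B) : Prop :=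
  ∀ (n : ℕ) (M : Matrix (Fin n) (Fin n) A), IsPosEl M → IsPosEl (M.map Φ)

/-- Complete positivity of a linear map defined on a linear subspace `J ⊆ A`:
for every `n`, the entrywise application (i.e. `id_{B(ℂⁿ)} ⊗ Ξ`) maps matrices with
entries in `J` that are positive in `Mₙ(A)` to positive elements of `Mₙ(B)`. -/
def IsCPOn {A B : Type} [NonUnitalSemiring A] [StarRing A] [Module ℂ A]
    [NonUnitalSemiring B] [StarRing B] [Module ℂ B]
    (J : Submodule ℂ A) (Ξ : J →ₗ[ℂ] B) : Prop :=
  ∀ (n : ℕ) (M : Matrix (Fin n) (Fin n) J),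
    IsPosEl (M.map (fun x => (x : A))) → IsPosEl (M.map (fun x => Ξ x))

/-- The state space `S(A)`: positive elements of trace one. -/
def stateSet (ι : Type) [Fintype ι] [DecidableEq ι] (d : ι → Type)
    [∀ i, Fintype (d i)] [∀ i, DecidableEq (d i)] : Set (PiMat ι d) :=
  {a | IsPosEl a ∧ trL a = 1}

/-- `K` is a section of the state space: `K = [K] ∩ S(A)`. -/
def IsSection (K : Set (PiMat ι d)) : Prop :=
  K = (Submodule.span ℂ K : Set (PiMat ι d)) ∩ stateSet ι d

/-- The transpose `a ↦ aᵀ` (blockwise). -/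
def pT (a : PiMat ι d) : PiMat ι d := fun i => (a i).transpose

/-- The transpose as a linear map. -/
noncomputable def pTL : PiMat ι d →ₗ[ℂ] PiMat ι d where
  toFun := pT
  map_add' a b := by funext i; simp [pT]
  map_smul' c a := by funext i; simp [pT]

/-- The Hilbert–Schmidt inner product `⟨a,b⟩ = Tr(a* b)`. -/
noncomputable def hsIP (a b : PiMat ι d) : ℂ := trL (star a * b)

/-- The orthogonal complement `S^⊥` of a subset w.r.t. the Hilbert-Schmidt
inner product, as a (complex-linear) subspace. -/
noncomputable def orthSet (S : Set (PiMat ι d)) : Submodule ℂ (PiMat ι d) where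
  carrier := {x | ∀ a ∈ S, trL (star a * x) = 0}
  zero_mem' := by intro a _; simp
  add_mem' := by
    intro x y hx hy a ha
    rw [mul_add, map_add, hx a ha, hy a ha, add_zero]
  smul_mem' := by
    intro c x hx a ha
    rw [mul_smul_comm, map_smul, hx a ha, smul_zero]

/-- The embedding of `a ⊗ b` into the tensor product algebra
`(⊕ᵢ B(Hᵢ)) ⊗ (⊕ⱼ B(Kⱼ)) = ⊕_{i,j} B(Hᵢ ⊗ Kⱼ)`, realized via Kronecker products. -/
noncomputable def otimes (a : PiMat ι d) (b : PiMat κ e) :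
    PiMat (ι × κ) (fun p => d p.1 × e p.2) :=
  fun p => Matrix.kroneckerMap (· * ·) (a p.1) (b p.2)

/-- The tensor product `V ⊗ W` of two subsets as a subspace of the tensor
product algebra: the span of elementary tensors. -/
noncomputable def tensSub (V : Set (PiMat κ e)) (W : Set (PiMat ι d)) :
    Submodule ℂ (PiMat (κ × ι) (fun p => e p.1 × d p.2)) :=
  Submodule.span ℂ {x | ∃ b ∈ V, ∃ w ∈ W, x = otimes b w}

/-- The Choi matrix `X_Φ ∈ B ⊗ A` of a linear map `Φ : A → B`,
defined blockwise via `X_{Φ_ij} = (Φ_ij ⊗ id)(Ψ_{H_i})`. -/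
noncomputable def choi (Φ : PiMat ι d →ₗ[ℂ] PiMat κ e) :
    PiMat (κ × ι) (fun p => e p.1 × d p.2) :=
  fun p x y => Φ (Pi.single p.2 (Matrix.single x.2 y.2 1)) p.1 x.1 y.1

/-- The partial trace `Tr_B : B ⊗ A → A` over the first (output) factor. -/
noncomputable def ptrFst (X : PiMat (κ × ι) (fun p => e p.1 × d p.2)) : PiMat ι d :=
  fun i a b => ∑ j : κ, ∑ k : e j, X (j, i) (k, a) (k, b)

/-- The map `A → B` associated to a matrix `X ∈ B ⊗ A` via
`T_X(a) = Tr_A[(I_B ⊗ aᵀ) X]`. -/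
noncomputable def applyChoi (X : PiMat (κ × ι) (fun p => e p.1 × d p.2)) (a : PiMat ι d) :
    PiMat κ e :=
  fun j u v => ∑ i : ι, ∑ m : d i, ∑ x : d i, (a i) m x * X (j, i) (u, m) (v, x)

/-- A channel: a completely positive trace-preserving linear map. -/
def IsChannel (Φ : PiMat ι d →ₗ[ℂ] PiMat κ e) : Prop :=
  IsCP Φ ∧ ∀ a, trL (Φ a) = trL a

/-- For a self-adjoint subspace `J`, the subspace `J̃ = [I_A] ∨ (Jᵀ)^⊥` spanned by
`I_A + (Jᵀ)^⊥`. -/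
noncomputable def tilde (J : Submodule ℂ (PiMat ι d)) : Submodule ℂ (PiMat ι d) :=
  Submodule.span ℂ {(1 : PiMat ι d)} ⊔ orthSet (pT '' (J : Set (PiMat ι d)))

end GenCh

namespace GenCh

/-- The convex cone `Q = {λσ : λ ≥ 0, σ ∈ K}` generated by `K`. -/
def coneOf {ι : Type} [Fintype ι] [DecidableEq ι] {d : ι → Type}
    [∀ i, Fintype (d i)] [∀ i, DecidableEq (d i)]
    (K : Set (PiMat ι d)) : Set (PiMat ι d) :=
  {x | ∃ (t : ℝ) (σ : PiMat ι d), 0 ≤ t ∧ σ ∈ K ∧ x = t • σ}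

section Aux

variable {ι : Type} [Fintype ι] [DecidableEq ι] {d : ι → Type}
  [∀ i, Fintype (d i)] [∀ i, DecidableEq (d i)]

lemma isPosEl_star_eq {a : PiMat ι d} (h : IsPosEl a) : star a = a := by
  obtain ⟨b, rfl⟩ := h
  simp [star_mul]

lemma real_smul_eq (t : ℝ) (a : PiMat ι d) : t • a = (t : ℂ) • a := by
  rw [show ((t : ℂ)) = algebraMap ℝ ℂ t from rfl, algebraMap_smul]

lemma trL_isPosEl {a : PiMat ι d} (h : IsPosEl a) :
    ∃ r : ℝ, 0 ≤ r ∧ trL a = (r : ℂ) ∧ (r = 0 → a = 0) := by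
  obtain ⟨b, rfl⟩ := h
  refine ⟨∑ i, ∑ j, ∑ k, Complex.normSq (b i k j),
    Finset.sum_nonneg fun i _ => Finset.sum_nonneg fun j _ =>
      Finset.sum_nonneg fun k _ => Complex.normSq_nonneg _, ?_, ?_⟩
  · have key : trL (star b * b) =
        ∑ i, ∑ j, ∑ k, (starRingEnd ℂ) (b i k j) * b i k j := by
      simp [trL, Matrix.trace, Matrix.diag, Matrix.mul_apply,
        Matrix.conjTranspose_apply, Complex.star_def]
    rw [key]
    push_cast
    exact Finset.sum_congr rfl fun i _ => Finset.sum_congr rfl fun j _ =>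
      Finset.sum_congr rfl fun k _ => (Complex.normSq_eq_conj_mul_self).symm
  · intro hr
    have hb : b = 0 := by
      funext i
      ext k j
      have h1 : ∀ i ∈ Finset.univ, (0:ℝ) ≤ ∑ j, ∑ k, Complex.normSq (b i k j) :=
        fun i _ => Finset.sum_nonneg fun j _ =>
          Finset.sum_nonneg fun k _ => Complex.normSq_nonneg _
      have h2 := (Finset.sum_eq_zero_iff_of_nonneg h1).1 hr i (Finset.mem_univ i)
      have h3 : ∀ j ∈ Finset.univ, (0:ℝ) ≤ ∑ k, Complex.normSq (b i k j) :=
        fun j _ => Finset.sum_nonneg fun k _ => Complex.normSq_nonneg _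
      have h4 := (Finset.sum_eq_zero_iff_of_nonneg h3).1 h2 j (Finset.mem_univ j)
      have h5 := (Finset.sum_eq_zero_iff_of_nonneg
        (fun k _ => Complex.normSq_nonneg (b i k j))).1 h4 k (Finset.mem_univ k)
      simpa using Complex.normSq_eq_zero.1 h5
    simp [hb]

lemma isPosEl_smul {a : PiMat ι d} (h : IsPosEl a) {t : ℝ} (ht : 0 ≤ t) :
    IsPosEl (t • a) := by
  obtain ⟨b, rfl⟩ := h
  refine ⟨((Real.sqrt t : ℂ)) • b, ?_⟩
  rw [star_smul, smul_mul_smul_comm, real_smul_eq]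
  congr 1
  rw [Complex.star_def, Complex.conj_ofReal, ← Complex.ofReal_mul,
    Real.mul_self_sqrt ht]

lemma coneOf_add {K : Set (PiMat ι d)} (hconv : Convex ℝ K) {a b : PiMat ι d}
    (ha : a ∈ coneOf K) (hb : b ∈ coneOf K) : a + b ∈ coneOf K := by
  obtain ⟨t, σ, ht, hσ, rfl⟩ := ha
  obtain ⟨s, τ, hs, hτ, rfl⟩ := hb
  rcases eq_or_lt_of_le (add_nonneg ht hs) with h | h
  · have ht0 : t = 0 := by linarith
    have hs0 : s = 0 := by linarith
    exact ⟨0, σ, le_rfl, hσ, by simp [ht0, hs0]⟩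
  · refine ⟨t + s, (t / (t + s)) • σ + (s / (t + s)) • τ, h.le,
      hconv hσ hτ (div_nonneg ht h.le) (div_nonneg hs h.le) (by field_simp), ?_⟩
    rw [smul_add, smul_smul, smul_smul, mul_div_cancel₀ _ h.ne',
      mul_div_cancel₀ _ h.ne']

lemma sum_smul_mem_coneOf {K : Set (PiMat ι d)} (hconv : Convex ℝ K)
    (hne : K.Nonempty) {n : ℕ} (r : Fin n → ℝ) (σ : Fin n → PiMat ι d)
    (hr : ∀ i, 0 ≤ r i) (hσ : ∀ i, σ i ∈ K) :
    (∑ i, r i • σ i) ∈ coneOf K := by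
  obtain ⟨σ0, hσ0⟩ := hne
  refine Finset.sum_induction _ (· ∈ coneOf K) (fun a b ha hb => coneOf_add hconv ha hb)
    ⟨0, σ0, le_rfl, hσ0, (zero_smul _ _).symm⟩ ?_
  exact fun i _ => ⟨r i, σ i, hr i, hσ i, rfl⟩

end Aux

/-- Let `K ⊆ S(A)` be a compact convex subset and
`Q = {λσ : λ ≥ 0, σ ∈ K}`. Then `K` is a section of `S(A)` iff
for all `a, b ∈ Q` with `b ≤ a` (i.e. `a - b ∈ A⁺`) one has `a - b ∈ Q`. -/
theorem isSection_iff_cone_hereditary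
    {ι : Type} [Fintype ι] [DecidableEq ι] {d : ι → Type}
    [∀ i, Fintype (d i)] [∀ i, DecidableEq (d i)]
    (K : Set (PiMat ι d)) (hK : K ⊆ stateSet ι d)
    (hconv : Convex ℝ K) (hcpt : IsCompact K) :
    IsSection K ↔
      ∀ a b, a ∈ coneOf K → b ∈ coneOf K → IsPosEl (a - b) → a - b ∈ coneOf K := by
  constructor
  · -- section → hereditary
    intro hsec a b ha hb hpos
    obtain ⟨t, σ, ht, hσ, rfl⟩ := ha
    obtain ⟨s, τ, hs, hτ, rfl⟩ := hb
    obtain ⟨r, hr0, hrtr, hrzero⟩ := trL_isPosEl hpos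
    rcases eq_or_lt_of_le hr0 with h | h
    · rw [hrzero h.symm]
      exact ⟨0, σ, le_rfl, hσ, (zero_smul _ _).symm⟩
    · set y : PiMat ι d := (r⁻¹ : ℝ) • (t • σ - s • τ) with hy
      have hy_span : y ∈ Submodule.span ℂ K := by
        rw [hy, real_smul_eq, real_smul_eq t, real_smul_eq s]
        exact Submodule.smul_mem _ _ (sub_mem
          (Submodule.smul_mem _ _ (Submodule.subset_span hσ))
          (Submodule.smul_mem _ _ (Submodule.subset_span hτ)))
      have hy_pos : IsPosEl y := isPosEl_smul hpos (inv_nonneg.2 hr0)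
      have hy_tr : trL y = 1 := by
        rw [hy, real_smul_eq, map_smul, hrtr, smul_eq_mul, ← Complex.ofReal_mul,
          inv_mul_cancel₀ h.ne', Complex.ofReal_one]
      have hyK : y ∈ K := by
        rw [hsec]
        exact ⟨hy_span, hy_pos, hy_tr⟩
      exact ⟨r, y, hr0, hyK, by
        rw [hy, smul_smul, mul_inv_cancel₀ h.ne', one_smul]⟩
  · -- hereditary → section
    intro hher
    apply Set.eq_of_subset_of_subset
    · exact fun x hx => ⟨Submodule.subset_span hx, hK hx⟩
    · rintro x ⟨hx_span, hx_pos, hx_tr⟩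
      obtain ⟨n, c, g, hsum⟩ := Submodule.mem_span_set'.1 hx_span
      -- K is nonempty
      have hne : K.Nonempty := by
        rcases n with _ | m
        · exfalso
          rw [← hsum] at hx_tr
          simp at hx_tr
        · exact ⟨(g 0 : PiMat ι d), (g 0).2⟩
      -- each element of K is self-adjoint
      have hsa : ∀ i : Fin n, star ((g i : PiMat ι d)) = (g i : PiMat ι d) :=
        fun i => isPosEl_star_eq (hK (g i).2).1
      -- x is a real combination of elements of K
      have hx_star : star x = x := isPosEl_star_eq hx_pos
      have hx2 : x = ∑ i, ((c i).re : ℝ) • (g i : PiMat ι d) := by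
        have h1 : x = ∑ i, (starRingEnd ℂ) (c i) • (g i : PiMat ι d) := by
          conv_lhs => rw [← hx_star, ← hsum]
          rw [star_sum]
          exact Finset.sum_congr rfl fun i _ => by rw [star_smul, hsa i]; rfl
        have h2 : (2 : ℂ) • x = ∑ i, ((c i) + (starRingEnd ℂ) (c i)) • (g i : PiMat ι d) := by
          calc (2 : ℂ) • x = x + x := two_smul ℂ x
            _ = ∑ i, c i • (g i : PiMat ι d) + ∑ i, (starRingEnd ℂ) (c i) • (g i : PiMat ι d) := by
                rw [← hsum, ← h1]; rw [hsum]
            _ = _ := by rw [← Finset.sum_add_distrib]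
                        exact Finset.sum_congr rfl fun i _ => (add_smul _ _ _).symm
        have h3 : x = ∑ i, (((c i).re : ℂ)) • (g i : PiMat ι d) := by
          have := congrArg (fun z => (2 : ℂ)⁻¹ • z) h2
          simp only [smul_smul] at this
          rw [inv_mul_cancel₀ (two_ne_zero), one_smul] at this
          rw [this, Finset.smul_sum]
          refine Finset.sum_congr rfl fun i _ => ?_
          rw [smul_smul]
          congr 1
          rw [Complex.add_conj]
          push_cast
          ring
        rw [h3]
        exact Finset.sum_congr rfl fun i _ => (real_smul_eq _ _).symm
      -- split into positive and negative parts
      set P : PiMat ι d := ∑ i, (max (c i).re 0) • (g i : PiMat ι d) with hP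
      set N : PiMat ι d := ∑ i, (max (-(c i).re) 0) • (g i : PiMat ι d) with hN
      have hxPN : x = P - N := by
        rw [hP, hN, ← Finset.sum_sub_distrib, hx2]
        refine Finset.sum_congr rfl fun i _ => ?_
        rw [← sub_smul]
        congr 1
        rcases le_total 0 (c i).re with h | h
        · rw [max_eq_left h, max_eq_right (by linarith)]; ring
        · rw [max_eq_right h, max_eq_left (by linarith)]; ring
      have hPQ : P ∈ coneOf K := sum_smul_mem_coneOf hconv hne _ _
        (fun i => le_max_right _ _) (fun i => (g i).2)
      have hNQ : N ∈ coneOf K := sum_smul_mem_coneOf hconv hne _ _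
        (fun i => le_max_right _ _) (fun i => (g i).2)
      have hxQ : x ∈ coneOf K := by
        rw [hxPN]
        exact hher P N hPQ hNQ (by rw [← hxPN]; exact hx_pos)
      obtain ⟨t, σ, ht, hσ, hxt⟩ := hxQ
      have htr : trL x = (t : ℂ) := by
        rw [hxt, real_smul_eq, map_smul, (hK hσ).2, smul_eq_mul, mul_one]
      have ht1 : t = 1 := by
        rw [hx_tr] at htr
        exact_mod_cast htr.symm
      rw [hxt, ht1, one_smul]
      exact hσ

end GenCh
end

section
/- Let A be a finite-dimensional C*-algebra, J ⊆ A a self-adjoint linear subspace, and suppose K = J ∩ S(A) is nonempty. Then there exists an orthogonal projection p ∈ A such that [K] = J ∩ pAp. In particular, if J contains a positive invertible element, then J = [K]. -/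
open scoped BigOperators Pointwise

namespace GenCh

/-- The compression map `a ↦ p a p`; its range is the compressed algebra `pAp`. -/
noncomputable def compress {ι : Type} [Fintype ι] [DecidableEq ι] {d : ι → Type}
    [∀ i, Fintype (d i)] [∀ i, DecidableEq (d i)]
    (p : PiMat ι d) : PiMat ι d →ₗ[ℂ] PiMat ι d :=
  (LinearMap.mulLeft ℂ p).comp (LinearMap.mulRight ℂ p)

end GenCh

section AuxLemmas

open Matrix
open scoped ComplexOrder

namespace GenChAux

set_option linter.unusedSectionVars false

variable {n : Type} [Fintype n] [DecidableEq n]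

lemma smul_psd {M : Matrix n n ℂ} (hM : M.PosSemidef) {r : ℝ} (hr : 0 ≤ r) :
    ((r : ℂ) • M).PosSemidef := by
  rw [posSemidef_iff_dotProduct_mulVec]
  constructor
  · have h1 := hM.1
    unfold Matrix.IsHermitian at h1 ⊢
    rw [conjTranspose_smul, h1]
    congr 1
    simp [Complex.conj_ofReal]
  · intro x
    rw [smul_mulVec, dotProduct_smul, smul_eq_mul]
    have : (0 : ℂ) ≤ (r : ℂ) := by exact_mod_cast hr
    exact mul_nonneg this ((posSemidef_iff_dotProduct_mulVec.mp hM).2 x)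

lemma udiag_psd (U : Matrix n n ℂ) (f : n → ℝ) (hf : ∀ j, 0 ≤ f j) :
    (U * Matrix.diagonal (Complex.ofReal ∘ f) * star U).PosSemidef := by
  have h1 : (Matrix.diagonal (Complex.ofReal ∘ f)).PosSemidef :=
    Matrix.posSemidef_diagonal_iff.mpr (fun j => by
      simpa using (by exact_mod_cast hf j : (0:ℂ) ≤ (f j : ℂ)))
  have h2 := h1.mul_mul_conjTranspose_same U
  rwa [Matrix.star_eq_conjTranspose]

open scoped MatrixOrder Matrix.Norms.L2Operator in
lemma posSemidef_iff_eq_transpose_mul_self {A : Matrix n n ℂ} :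
    A.PosSemidef ↔ ∃ B : Matrix n n ℂ, A = Bᴴ * B := by
  rw [← nonneg_iff_posSemidef]
  exact CStarAlgebra.nonneg_iff_eq_star_mul_self

lemma psd_eq_zero_of_add {A B : Matrix n n ℂ} (hA : A.PosSemidef) (hB : B.PosSemidef)
    (h : A + B = 0) : A = 0 := by
  obtain ⟨C, rfl⟩ := posSemidef_iff_eq_transpose_mul_self.mp hA
  suffices hC : C = 0 by simp [hC]
  have hx : ∀ x, C *ᵥ x = 0 := by
    intro x
    have h1 : star x ⬝ᵥ ((Cᴴ * C) *ᵥ x) + star x ⬝ᵥ (B *ᵥ x) = 0 := by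
      have := congrArg (fun M => star x ⬝ᵥ (M *ᵥ x)) h
      simpa [add_mulVec] using this
    have h2 : star x ⬝ᵥ ((Cᴴ * C) *ᵥ x) = 0 :=
      le_antisymm (h1 ▸ le_add_of_nonneg_right ((posSemidef_iff_dotProduct_mulVec.mp hB).2 x))
        ((posSemidef_iff_dotProduct_mulVec.mp hA).2 x)
    have h3 : star (C *ᵥ x) ⬝ᵥ (C *ᵥ x) = 0 := by
      rw [star_mulVec, ← dotProduct_mulVec, mulVec_mulVec]
      exact h2
    exact dotProduct_star_self_eq_zero.mp h3
  ext i j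
  have := congrFun (hx (Pi.single j 1)) i
  simpa [mulVec_single] using this

lemma matrix_corner {p σ : Matrix n n ℂ} (hp : p.IsHermitian) (hσ : σ.PosSemidef)
    (h0 : (1 - p) * σ * (1 - p) = 0) : p * σ * p = σ := by
  obtain ⟨B, rfl⟩ := posSemidef_iff_eq_transpose_mul_self.mp hσ
  have hq : (1 - p)ᴴ = 1 - p := by
    rw [conjTranspose_sub, conjTranspose_one, hp.eq]
  have h1 : (B * (1 - p))ᴴ * (B * (1 - p)) = 0 := by
    have e : (B * (1 - p))ᴴ * (B * (1 - p)) = (1-p)ᴴ * (Bᴴ * B) * (1-p) := by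
      rw [conjTranspose_mul]; noncomm_ring
    rw [e, hq]; exact h0
  have h2 : B * (1 - p) = 0 := conjTranspose_mul_self_eq_zero.mp h1
  have h3 : B * p = B := by
    rw [mul_sub, mul_one, sub_eq_zero] at h2; exact h2.symm
  have e2 : p * (Bᴴ * B) * p = (B * p)ᴴ * (B * p) := by
    rw [conjTranspose_mul, hp.eq]; noncomm_ring
  rw [e2, h3]

lemma udiag_mul (U : Matrix n n ℂ) (hU' : star U * U = 1) (f g : n → ℝ) :
    (U * diagonal (Complex.ofReal ∘ f) * star U) * (U * diagonal (Complex.ofReal ∘ g) * star U)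
      = U * diagonal (Complex.ofReal ∘ (f * g)) * star U := by
  have hfun : (fun i => (Complex.ofReal ∘ f) i * (Complex.ofReal ∘ g) i)
      = Complex.ofReal ∘ (f * g) := by
    funext j; simp [Function.comp]
  have hd : diagonal (Complex.ofReal ∘ f) * diagonal (Complex.ofReal ∘ g)
      = diagonal (Complex.ofReal ∘ (f * g)) := by
    rw [diagonal_mul_diagonal, hfun]
  have e1 : (U * diagonal (Complex.ofReal ∘ f) * star U) *
      (U * diagonal (Complex.ofReal ∘ g) * star U)
      = U * (diagonal (Complex.ofReal ∘ f) * ((star U * U) *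
          (diagonal (Complex.ofReal ∘ g)))) * star U := by noncomm_ring
  rw [e1, hU', one_mul, ← hd]

lemma udiag_herm (U : Matrix n n ℂ) (f : n → ℝ) :
    (U * diagonal (Complex.ofReal ∘ f) * star U).IsHermitian := by
  have hfun : star (Complex.ofReal ∘ f) = Complex.ofReal ∘ f := by
    funext j; simp [Function.comp, Complex.conj_ofReal]
  have hd : (diagonal (Complex.ofReal ∘ f))ᴴ = diagonal (Complex.ofReal ∘ f) := by
    rw [diagonal_conjTranspose, hfun]
  unfold Matrix.IsHermitian
  rw [Matrix.star_eq_conjTranspose, conjTranspose_mul, conjTranspose_mul,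
    conjTranspose_conjTranspose, hd, mul_assoc]

lemma matrix_support {A : Matrix n n ℂ} (hA : A.PosSemidef) :
    ∃ (p : Matrix n n ℂ) (δ : ℝ), p.IsHermitian ∧ p * p = p ∧ A * p = A ∧ 0 < δ ∧
      (A - (δ : ℂ) • p).PosSemidef := by
  classical
  have hH := hA.1
  set U : Matrix n n ℂ := (hH.eigenvectorUnitary : Matrix n n ℂ) with hUdef
  set ev : n → ℝ := hH.eigenvalues with hevdef
  have hU : U * star U = 1 := mem_unitaryGroup_iff.mp (hH.eigenvectorUnitary).2
  have hU' : star U * U = 1 := mem_unitaryGroup_iff'.mp (hH.eigenvectorUnitary).2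
  have hspec : A = U * diagonal (Complex.ofReal ∘ ev) * star U := hH.spectral_theorem
  set g : n → ℝ := fun j => if ev j = 0 then 0 else 1 with hgdef
  set p := U * diagonal (Complex.ofReal ∘ g) * star U with hpdef
  set S : Finset n := Finset.univ.filter (fun j => ev j ≠ 0) with hSdef
  set δ : ℝ := if hS : S.Nonempty then (S.image ev).min' (hS.image ev) else 1 with hδdef
  have hδpos : 0 < δ := by
    rw [hδdef]
    split_ifs with hS
    · obtain ⟨j, hj1, hj2⟩ := Finset.mem_image.mp ((S.image ev).min'_mem (hS.image ev))
      rw [← hj2]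
      have := (Finset.mem_filter.mp hj1).2
      exact lt_of_le_of_ne (hA.eigenvalues_nonneg j) (Ne.symm this)
    · norm_num
  have hδle : ∀ j, ev j ≠ 0 → δ ≤ ev j := by
    intro j hj
    have hjS : j ∈ S := Finset.mem_filter.mpr ⟨Finset.mem_univ j, hj⟩
    have hS : S.Nonempty := ⟨j, hjS⟩
    rw [hδdef, dif_pos hS]
    exact (S.image ev).min'_le (ev j) (Finset.mem_image_of_mem ev hjS)
  refine ⟨p, δ, udiag_herm U g, ?_, ?_, hδpos, ?_⟩
  · rw [hpdef, udiag_mul U hU' g g]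
    have : g * g = g := by
      funext j; by_cases h : ev j = 0 <;> simp [hgdef, h, Pi.mul_apply]
    rw [this]
  · rw [hspec, hpdef, udiag_mul U hU' ev g]
    have : ev * g = ev := by
      funext j; by_cases h : ev j = 0 <;> simp [hgdef, h, Pi.mul_apply]
    rw [this]
  · have e : A - (δ : ℂ) • p
        = U * diagonal (Complex.ofReal ∘ (fun j => ev j - δ * g j)) * star U := by
      rw [hspec, hpdef]
      have hd : diagonal (Complex.ofReal ∘ (fun j => ev j - δ * g j))
          = diagonal (Complex.ofReal ∘ ev) - (δ:ℂ) • diagonal (Complex.ofReal ∘ g) := by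
        ext i j
        rcases eq_or_ne i j with rfl | h
        · simp [Function.comp]
        · simp [Matrix.diagonal_apply_ne _ h, h]
      rw [hd, mul_sub, sub_mul, mul_smul_comm, smul_mul_assoc]
    rw [e]
    apply udiag_psd
    intro j
    by_cases h : ev j = 0
    · simp [hgdef, h]
    · have := hδle j h
      simp only [hgdef]
      rw [if_neg h]
      linarith

lemma matrix_bound {A : Matrix n n ℂ} (hA : A.IsHermitian) :
    ∃ c : ℝ, 0 < c ∧ ((c : ℂ) • 1 + A).PosSemidef := by
  classical
  set U : Matrix n n ℂ := (hA.eigenvectorUnitary : Matrix n n ℂ) with hUdef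
  set ev : n → ℝ := hA.eigenvalues with hevdef
  have hU : U * star U = 1 := mem_unitaryGroup_iff.mp (hA.eigenvectorUnitary).2
  have hspec : A = U * diagonal (Complex.ofReal ∘ ev) * star U := hA.spectral_theorem
  set c : ℝ := 1 + ∑ j, |ev j| with hcdef
  have hc : 0 < c := by
    rw [hcdef]
    have : (0:ℝ) ≤ ∑ j, |ev j| := Finset.sum_nonneg fun j _ => abs_nonneg _
    linarith
  refine ⟨c, hc, ?_⟩
  have e : (c : ℂ) • 1 + A = U * diagonal (Complex.ofReal ∘ (fun j => c + ev j)) * star U := by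
    have hdc : diagonal (Complex.ofReal ∘ (fun _ : n => c)) = (c : ℂ) • (1 : Matrix n n ℂ) := by
      ext i j
      rcases eq_or_ne i j with rfl | h
      · simp [Function.comp]
      · simp [Matrix.diagonal_apply_ne _ h, h]
    have h1 : U * diagonal (Complex.ofReal ∘ (fun _ : n => c)) * star U
        = (c : ℂ) • (1 : Matrix n n ℂ) := by
      rw [hdc, mul_smul_comm, smul_mul_assoc, mul_one, hU]
    have h2 : diagonal (Complex.ofReal ∘ (fun j => c + ev j))
        = diagonal (Complex.ofReal ∘ (fun _ => c)) + diagonal (Complex.ofReal ∘ ev) := by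
      ext i j
      rcases eq_or_ne i j with rfl | h
      · simp [Function.comp]
      · simp [Matrix.diagonal_apply_ne _ h, h]
    rw [h2, mul_add, add_mul, h1, ← hspec]
  rw [e]
  apply udiag_psd
  intro j
  have h1 : |ev j| ≤ ∑ k, |ev k| :=
    Finset.single_le_sum (fun k _ => abs_nonneg (ev k)) (Finset.mem_univ j)
  have h2 : -(ev j) ≤ |ev j| := neg_le_abs _
  simp only [hcdef]
  linarith

lemma psd_sum {α : Type} (s : Finset α) (f : α → Matrix n n ℂ)
    (h : ∀ x ∈ s, (f x).PosSemidef) : (∑ x ∈ s, f x).PosSemidef :=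
  Finset.sum_induction f Matrix.PosSemidef (fun _ _ ha hb => ha.add hb)
    Matrix.PosSemidef.zero h

end GenChAux

end AuxLemmas

namespace GenChAux

open Matrix GenCh
open scoped ComplexOrder

set_option linter.unusedSectionVars false

variable {ι : Type} [Fintype ι] [DecidableEq ι] {d : ι → Type}
  [∀ i, Fintype (d i)] [∀ i, DecidableEq (d i)]

lemma isPosEl_iff_blocks {a : PiMat ι d} : IsPosEl a ↔ ∀ i, (a i).PosSemidef := by
  constructor
  · rintro ⟨b, rfl⟩ i
    have h : (star b * b) i = (b i)ᴴ * (b i) := rfl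
    rw [h]
    exact posSemidef_conjTranspose_mul_self (b i)
  · intro h
    choose B hB using fun i => posSemidef_iff_eq_transpose_mul_self.mp (h i)
    exact ⟨fun i => B i, funext fun i => hB i⟩

lemma trL_apply (a : PiMat ι d) : trL a = ∑ i, (a i).trace := rfl

lemma trL_star (a : PiMat ι d) : trL (star a) = star (trL a) := by
  rw [trL_apply, trL_apply, star_sum]
  congr 1
  funext i
  exact Matrix.trace_conjTranspose (a i)

lemma trL_real_of_posEl {a : PiMat ι d} (h : IsPosEl a) :
    ∃ s : ℝ, 0 ≤ s ∧ trL a = (s : ℂ) ∧ (s = 0 → a = 0) := by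
  obtain ⟨b, rfl⟩ := h
  refine ⟨∑ i, ∑ j, ∑ k, Complex.normSq (b i k j), ?_, ?_, ?_⟩
  · exact Finset.sum_nonneg fun i _ => Finset.sum_nonneg fun j _ =>
      Finset.sum_nonneg fun k _ => Complex.normSq_nonneg _
  · have hterm : ∀ i, ((star b * b) i).trace = ∑ j, ∑ k, (Complex.normSq (b i k j) : ℂ) := by
      intro i
      have h1 : (star b * b) i = (b i)ᴴ * (b i) := rfl
      rw [h1, Matrix.trace]
      congr 1
      funext j
      rw [Matrix.diag_apply, Matrix.mul_apply]
      congr 1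
      funext k
      rw [Matrix.conjTranspose_apply, Complex.normSq_eq_conj_mul_self]
      rfl
    rw [trL_apply]
    simp only [hterm]
    push_cast
    rfl
  · intro hs
    have hz : ∀ i k j, Complex.normSq (b i k j) = 0 := by
      intro i k j
      have h1 := (Finset.sum_eq_zero_iff_of_nonneg
        (fun i _ => Finset.sum_nonneg fun j _ => Finset.sum_nonneg fun k _ =>
          Complex.normSq_nonneg _)).mp hs i (Finset.mem_univ i)
      have h2 := (Finset.sum_eq_zero_iff_of_nonneg
        (fun j _ => Finset.sum_nonneg fun k _ =>
          Complex.normSq_nonneg _)).mp h1 j (Finset.mem_univ j)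
      exact (Finset.sum_eq_zero_iff_of_nonneg
        (fun k _ => Complex.normSq_nonneg _)).mp h2 k (Finset.mem_univ k)
    have hb : b = 0 := by
      funext i
      ext k j
      have := hz i k j
      rw [Complex.normSq_eq_zero] at this
      simpa using this
    rw [hb]; simp

lemma herm_mem_span (J : Submodule ℂ (PiMat ι d)) (ρ p : PiMat ι d)
    (hρJ : ρ ∈ J) (hρPos : IsPosEl ρ) (hρtr : trL ρ = 1)
    (hδ : ∀ i, ∃ δ : ℝ, 0 < δ ∧ ((ρ i) - (δ : ℂ) • (p i)).PosSemidef)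
    (hpH : ∀ i, (p i).IsHermitian) (hpp : ∀ i, p i * p i = p i)
    (hρp : ∀ i, p i * ρ i * p i = ρ i)
    (a : PiMat ι d) (haJ : a ∈ J) (haH : ∀ i, (a i).IsHermitian)
    (hap : ∀ i, p i * a i * p i = a i) :
    a ∈ Submodule.span ℂ ((J : Set (PiMat ι d)) ∩ stateSet ι d) := by
  classical
  have hρP : ∀ i, (ρ i).PosSemidef := isPosEl_iff_blocks.mp hρPos
  have ht : trL a = ((trL a).re : ℂ) := by
    have h1 : (starRingEnd ℂ) (trL a) = trL a := by
      have h2 : star a = a := funext fun i => (haH i).eq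
      calc (starRingEnd ℂ) (trL a) = star (trL a) := rfl
      _ = trL (star a) := (trL_star a).symm
      _ = trL a := by rw [h2]
    exact (Complex.conj_eq_iff_re.mp h1).symm
  set t : ℝ := (trL a).re with htdef
  set a' : PiMat ι d := a - (t : ℂ) • ρ with ha'def
  have ha'J : a' ∈ J := J.sub_mem haJ (J.smul_mem _ hρJ)
  have ha'block : ∀ i, a' i = a i - (t : ℂ) • ρ i := fun i => rfl
  have ha'H : ∀ i, (a' i).IsHermitian := by
    intro i
    unfold Matrix.IsHermitian
    rw [ha'block, conjTranspose_sub, conjTranspose_smul, (haH i).eq, (hρP i).1.eq]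
    congr 1
    simp [Complex.conj_ofReal]
  have ha'tr : trL a' = 0 := by
    rw [ha'def, map_sub, _root_.map_smul, hρtr, smul_eq_mul, mul_one, ← ht, sub_self]
  have ha'p : ∀ i, p i * a' i * p i = a' i := by
    intro i
    rw [ha'block]
    rw [mul_sub, sub_mul, mul_smul_comm, smul_mul_assoc, hap i, hρp i, ← ha'block]
  choose δ hδpos hδpsd using hδ
  choose c hcpos hcpsd using fun i => matrix_bound (ha'H i)
  obtain ⟨ε, hεpos, hεle⟩ : ∃ ε : ℝ, 0 < ε ∧ ∀ i, ε * c i ≤ δ i := by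
    by_cases h : Nonempty ι
    · haveI := h
      refine ⟨Finset.univ.inf' Finset.univ_nonempty (fun i => δ i / c i), ?_, ?_⟩
      · rw [Finset.lt_inf'_iff]
        intro i _
        exact div_pos (hδpos i) (hcpos i)
      · intro i
        have h1 : Finset.univ.inf' Finset.univ_nonempty (fun i => δ i / c i) ≤ δ i / c i :=
          Finset.inf'_le _ (Finset.mem_univ i)
        have h2 := mul_le_mul_of_nonneg_right h1 (hcpos i).le
        rwa [div_mul_cancel₀ _ (hcpos i).ne'] at h2
    · exact ⟨1, one_pos, fun i => absurd ⟨i⟩ h⟩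
  set σ : PiMat ι d := ρ + (ε : ℂ) • a' with hσdef
  have hσblock : ∀ i, σ i = ρ i + (ε : ℂ) • a' i := fun i => rfl
  have hpPSD : ∀ i, (p i).PosSemidef := by
    intro i
    have h1 := posSemidef_conjTranspose_mul_self (p i)
    rwa [(hpH i).eq, hpp i] at h1
  have hσP : ∀ i, (σ i).PosSemidef := by
    intro i
    have hpap : p i * ((c i : ℂ) • 1 + a' i) * p i = (c i : ℂ) • p i + a' i := by
      rw [mul_add, add_mul, ha'p i, mul_smul_comm, smul_mul_assoc, mul_one, hpp i]
    have e : σ i = (ρ i - (δ i : ℂ) • p i) + (((δ i - ε * c i : ℝ) : ℂ) • p i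
        + (ε : ℂ) • ((c i : ℂ) • p i + a' i)) := by
      rw [hσblock]
      push_cast
      module
    rw [e]
    refine (hδpsd i).add (PosSemidef.add ?_ ?_)
    · exact smul_psd (hpPSD i) (sub_nonneg.mpr (hεle i))
    · refine smul_psd ?_ hεpos.le
      have h1 := (hcpsd i).mul_mul_conjTranspose_same (p i)
      rw [(show (p i)ᴴ = p i from (hpH i).eq), hpap] at h1
      exact h1
  have hσJ : σ ∈ J := J.add_mem hρJ (J.smul_mem _ ha'J)
  have hσtr : trL σ = 1 := by
    rw [hσdef, map_add, _root_.map_smul, hρtr, ha'tr, smul_zero, add_zero]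
  have hσs : σ ∈ Submodule.span ℂ ((J : Set (PiMat ι d)) ∩ stateSet ι d) :=
    Submodule.subset_span ⟨hσJ, isPosEl_iff_blocks.mpr hσP, hσtr⟩
  have hρs : ρ ∈ Submodule.span ℂ ((J : Set (PiMat ι d)) ∩ stateSet ι d) :=
    Submodule.subset_span ⟨hρJ, isPosEl_iff_blocks.mpr hρP, hρtr⟩
  have ha' : a' = (ε : ℂ)⁻¹ • (σ - ρ) := by
    rw [hσdef, add_sub_cancel_left, smul_smul,
      inv_mul_cancel₀ (by exact_mod_cast hεpos.ne' : (ε : ℂ) ≠ 0), one_smul]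
  have haeq : a = a' + (t : ℂ) • ρ := by rw [ha'def, sub_add_cancel]
  rw [haeq, ha']
  exact Submodule.add_mem _ (Submodule.smul_mem _ _ (Submodule.sub_mem _ hσs hρs))
    (Submodule.smul_mem _ _ hρs)

lemma mem_span_of_compress (J : Submodule ℂ (PiMat ι d))
    (hsa : ∀ a ∈ J, star a ∈ J) (ρ p : PiMat ι d)
    (hρJ : ρ ∈ J) (hρPos : IsPosEl ρ) (hρtr : trL ρ = 1)
    (hδ : ∀ i, ∃ δ : ℝ, 0 < δ ∧ ((ρ i) - (δ : ℂ) • (p i)).PosSemidef)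
    (hpH : ∀ i, (p i).IsHermitian) (hpp : ∀ i, p i * p i = p i)
    (hρp : ∀ i, p i * ρ i * p i = ρ i)
    (a : PiMat ι d) (haJ : a ∈ J)
    (hap : ∀ i, p i * a i * p i = a i) :
    a ∈ Submodule.span ℂ ((J : Set (PiMat ι d)) ∩ stateSet ι d) := by
  have hstar_block : ∀ i, (star a) i = (a i)ᴴ := fun i => rfl
  have hstar_ap : ∀ i, p i * (star a) i * p i = (star a) i := by
    intro i
    rw [hstar_block]
    have h1 := congrArg conjTranspose (hap i)
    rw [conjTranspose_mul, conjTranspose_mul, (hpH i).eq] at h1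
    calc p i * (a i)ᴴ * p i = p i * ((a i)ᴴ * p i) := by rw [mul_assoc]
    _ = (a i)ᴴ := h1
  set h : PiMat ι d := (2⁻¹ : ℂ) • (a + star a) with hhdef
  set k : PiMat ι d := ((2 : ℂ)⁻¹ * Complex.I) • (star a - a) with hkdef
  have hhJ : h ∈ J := J.smul_mem _ (J.add_mem haJ (hsa a haJ))
  have hkJ : k ∈ J := J.smul_mem _ (J.sub_mem (hsa a haJ) haJ)
  have hhblock : ∀ i, h i = (2⁻¹ : ℂ) • (a i + (a i)ᴴ) := fun i => rfl
  have hkblock : ∀ i, k i = ((2 : ℂ)⁻¹ * Complex.I) • ((a i)ᴴ - a i) := fun i => rfl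
  have hhH : ∀ i, (h i).IsHermitian := by
    intro i
    unfold Matrix.IsHermitian
    rw [hhblock, conjTranspose_smul, conjTranspose_add, conjTranspose_conjTranspose]
    rw [add_comm ((a i)ᴴ) (a i)]
    congr 1
    simp
  have hkH : ∀ i, (k i).IsHermitian := by
    intro i
    unfold Matrix.IsHermitian
    rw [hkblock, conjTranspose_smul, conjTranspose_sub, conjTranspose_conjTranspose]
    have h1 : star ((2 : ℂ)⁻¹ * Complex.I) = -((2 : ℂ)⁻¹ * Complex.I) := by
      simp [Complex.ext_iff]
    rw [h1, neg_smul, ← smul_neg, neg_sub]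
  have hhp : ∀ i, p i * h i * p i = h i := by
    intro i
    rw [hhblock, mul_smul_comm, smul_mul_assoc, mul_add, add_mul]
    have := hstar_ap i
    rw [hstar_block] at this
    rw [hap i, this]
  have hkp : ∀ i, p i * k i * p i = k i := by
    intro i
    rw [hkblock, mul_smul_comm, smul_mul_assoc, mul_sub, sub_mul]
    have := hstar_ap i
    rw [hstar_block] at this
    rw [hap i, this]
  have hhs := herm_mem_span J ρ p hρJ hρPos hρtr hδ hpH hpp hρp h hhJ hhH hhp
  have hks := herm_mem_span J ρ p hρJ hρPos hρtr hδ hpH hpp hρp k hkJ hkH hkp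
  have haeq : a = h + Complex.I • k := by
    rw [hhdef, hkdef, smul_smul]
    have h1 : Complex.I * ((2 : ℂ)⁻¹ * Complex.I) = -(2 : ℂ)⁻¹ := by
      rw [mul_comm (2:ℂ)⁻¹ Complex.I, ← mul_assoc, Complex.I_mul_I]
      ring
    rw [h1, neg_smul, ← smul_neg, neg_sub]
    module
  rw [haeq]
  exact Submodule.add_mem _ hhs (Submodule.smul_mem _ _ hks)


lemma posEl_smul {a : PiMat ι d} (h : IsPosEl a) {r : ℝ} (hr : 0 ≤ r) :
    IsPosEl (((r : ℝ) : ℂ) • a) := by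
  rw [isPosEl_iff_blocks] at h ⊢
  intro i
  have h1 : (((r : ℝ) : ℂ) • a) i = ((r : ℝ) : ℂ) • a i := rfl
  rw [h1]
  exact smul_psd (h i) hr

lemma posEl_sum (S : Finset (PiMat ι d)) (hS : ∀ σ ∈ S, IsPosEl σ) :
    IsPosEl (∑ σ ∈ S, σ) := by
  rw [isPosEl_iff_blocks]
  intro i
  have h1 : (∑ σ ∈ S, σ) i = ∑ σ ∈ S, σ i := Finset.sum_apply _ _ _
  rw [h1]
  exact psd_sum S (fun σ => σ i) (fun σ hσ => isPosEl_iff_blocks.mp (hS σ hσ) i)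

lemma pimat_support {ρ : PiMat ι d} (hρ : IsPosEl ρ) :
    ∃ p : PiMat ι d, (∀ i, (p i).IsHermitian) ∧ (∀ i, p i * p i = p i) ∧
      (∀ i, p i * ρ i = ρ i) ∧ (∀ i, p i * ρ i * p i = ρ i) ∧
      (∀ i, ∃ δ : ℝ, 0 < δ ∧ (ρ i - (δ : ℂ) • p i).PosSemidef) := by
  have hρP : ∀ i, (ρ i).PosSemidef := isPosEl_iff_blocks.mp hρ
  choose p δ hpH hpp hρp' hδpos hδpsd using fun i => matrix_support (hρP i)
  have hpρ : ∀ i, p i * ρ i = ρ i := by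
    intro i
    have h1 := congrArg Matrix.conjTranspose (hρp' i)
    rwa [Matrix.conjTranspose_mul, (hpH i).eq, (hρP i).1.eq] at h1
  exact ⟨fun i => p i, hpH, hpp, hpρ, fun i => by rw [hpρ i, hρp' i],
    fun i => ⟨δ i, hδpos i, hδpsd i⟩⟩

lemma compress_fix_of_sum (p : PiMat ι d) (hpH : ∀ i, (p i).IsHermitian)
    (ρ : PiMat ι d) (hpρ : ∀ i, p i * ρ i = ρ i)
    (S : Finset (PiMat ι d)) (hS : ∀ τ ∈ S, IsPosEl τ)
    (σ : PiMat ι d) (hσS : σ ∈ S) (m : ℂ)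
    (hsum : ∑ τ ∈ S, τ = m • ρ) :
    ∀ i, p i * σ i * p i = σ i := by
  intro i
  have hσP : ∀ i, (σ i).PosSemidef := isPosEl_iff_blocks.mp (hS σ hσS)
  set Zi : Matrix (d i) (d i) ℂ := ∑ τ ∈ S.erase σ, τ i with hZdef
  have hZP : Zi.PosSemidef :=
    psd_sum _ _ (fun τ hτ =>
      isPosEl_iff_blocks.mp (hS τ (Finset.mem_of_mem_erase hτ)) i)
  have hsum' : σ i + Zi = m • ρ i := by
    rw [hZdef]
    have h1 : σ i + ∑ τ ∈ S.erase σ, τ i = ∑ τ ∈ S, τ i :=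
      Finset.add_sum_erase S (fun τ => τ i) hσS
    rw [h1, ← Finset.sum_apply, hsum]
    rfl
  have hqρ : (1 - p i) * ρ i * (1 - p i) = 0 := by
    have h1 : (1 - p i) * ρ i = 0 := by
      rw [sub_mul, one_mul, hpρ i, sub_self]
    rw [h1, zero_mul]
  have hqH : (1 - p i)ᴴ = 1 - p i := by
    rw [Matrix.conjTranspose_sub, Matrix.conjTranspose_one, (hpH i).eq]
  have hadd : (1 - p i) * σ i * (1 - p i) + (1 - p i) * Zi * (1 - p i) = 0 := by
    have h1 : (1 - p i) * σ i * (1 - p i) + (1 - p i) * Zi * (1 - p i)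
        = (1 - p i) * (σ i + Zi) * (1 - p i) := by noncomm_ring
    rw [h1, hsum', mul_smul_comm, smul_mul_assoc, hqρ, smul_zero]
  have hq1 : ((1 - p i) * σ i * (1 - p i)).PosSemidef := by
    have h1 := (hσP i).mul_mul_conjTranspose_same (1 - p i)
    rwa [hqH] at h1
  have hq2 : ((1 - p i) * Zi * (1 - p i)).PosSemidef := by
    have h1 := hZP.mul_mul_conjTranspose_same (1 - p i)
    rwa [hqH] at h1
  exact matrix_corner (hpH i) (hσP i) (psd_eq_zero_of_add hq1 hq2 hadd)

lemma unit_support {ρ₀ : PiMat ι d} (hρ₀ : IsPosEl ρ₀) (hu : IsUnit ρ₀)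
    {r : ℝ} (hr : 0 < r) :
    ∀ i, ∃ δ' : ℝ, 0 < δ' ∧
      ((((r : ℝ) : ℂ) • ρ₀) i - (δ' : ℂ) • ((1 : PiMat ι d) i)).PosSemidef := by
  intro i
  have hρ₀P : ∀ i, (ρ₀ i).PosSemidef := isPosEl_iff_blocks.mp hρ₀
  obtain ⟨q, δq, hqH, hqq, hρq, hδqpos, hδqpsd⟩ := matrix_support (hρ₀P i)
  have hui : IsUnit (ρ₀ i) :=
    hu.map (Pi.evalMonoidHom (fun i => Matrix (d i) (d i) ℂ) i)
  have hq1 : q = 1 := by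
    have h1 : ρ₀ i * q = ρ₀ i * 1 := by rw [hρq, mul_one]
    exact hui.mul_left_cancel h1
  rw [hq1] at hδqpsd
  refine ⟨r * δq, by positivity, ?_⟩
  have e : (((r : ℝ) : ℂ) • ρ₀) i - ((r * δq : ℝ) : ℂ) • ((1 : PiMat ι d) i)
      = ((r : ℝ) : ℂ) • (ρ₀ i - (δq : ℂ) • 1) := by
    have h1 : (((r : ℝ) : ℂ) • ρ₀) i = ((r : ℝ) : ℂ) • ρ₀ i := rfl
    have h2 : ((1 : PiMat ι d) i) = (1 : Matrix (d i) (d i) ℂ) := rfl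
    rw [h1, h2]
    push_cast
    module
  rw [e]
  exact smul_psd hδqpsd hr.le

end GenChAux


namespace GenCh

/-- Let `J ⊆ A` be a self-adjoint subspace with
`K = J ∩ S(A)` nonempty. Then there is an orthogonal projection `p ∈ A` such that
`[K] = J ∩ pAp`. In particular, if `J` contains a positive invertible element,
then `J = [K]`. -/
theorem span_of_selfAdjoint_section
    {ι : Type} [Fintype ι] [DecidableEq ι] {d : ι → Type}
    [∀ i, Fintype (d i)] [∀ i, DecidableEq (d i)]
    (J : Submodule ℂ (PiMat ι d))
    (hsa : ∀ a ∈ J, star a ∈ J)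
    (hne : ((J : Set (PiMat ι d)) ∩ stateSet ι d).Nonempty) :
    (∃ p : PiMat ι d, IsSelfAdjoint p ∧ p * p = p ∧
        Submodule.span ℂ ((J : Set (PiMat ι d)) ∩ stateSet ι d) =
          J ⊓ LinearMap.range (compress p)) ∧
      ((∃ ρ ∈ J, IsPosEl ρ ∧ IsUnit ρ) →
        Submodule.span ℂ ((J : Set (PiMat ι d)) ∩ stateSet ι d) = J) := by
  classical
  obtain ⟨σ₀, hσ₀⟩ := hne
  set K : Set (PiMat ι d) := (J : Set (PiMat ι d)) ∩ stateSet ι d with hKdef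
  -- a finite subset of K spanning [K]
  obtain ⟨T, hT⟩ : (Submodule.span ℂ K).FG := IsNoetherian.noetherian _
  have hTspan : ∀ t ∈ T, (t : PiMat ι d) ∈ Submodule.span ℂ K := fun t ht => by
    rw [← hT]; exact Submodule.subset_span ht
  choose F hF1 hF2 using fun (t : {x // x ∈ T}) =>
    Submodule.mem_span_finite_of_mem_span (hTspan t t.2)
  set S0 : Finset (PiMat ι d) := T.attach.biUnion F with hS0def
  have hS0K : (S0 : Set (PiMat ι d)) ⊆ K := by
    intro x hx
    rw [Finset.mem_coe, Finset.mem_biUnion] at hx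
    obtain ⟨t, _, hxF⟩ := hx
    exact hF1 t hxF
  have hS0span : Submodule.span ℂ (S0 : Set (PiMat ι d)) = Submodule.span ℂ K := by
    apply le_antisymm (Submodule.span_mono hS0K)
    rw [← hT, Submodule.span_le]
    intro t ht
    rw [Finset.mem_coe] at ht
    have hsub : (F ⟨t, ht⟩ : Set (PiMat ι d)) ⊆ (S0 : Set (PiMat ι d)) := by
      intro x hx
      rw [Finset.mem_coe] at hx ⊢
      exact Finset.mem_biUnion.mpr ⟨⟨t, ht⟩, T.mem_attach _, hx⟩
    exact Submodule.span_mono hsub (hF2 ⟨t, ht⟩)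
  set S : Finset (PiMat ι d) := insert σ₀ S0 with hSdef
  have hSK : (S : Set (PiMat ι d)) ⊆ K := by
    intro x hx
    rw [Finset.coe_insert] at hx
    rcases hx with rfl | hx
    · exact hσ₀
    · exact hS0K hx
  have hSspan : Submodule.span ℂ (S : Set (PiMat ι d)) = Submodule.span ℂ K := by
    apply le_antisymm (Submodule.span_le.mpr fun x hx => Submodule.subset_span (hSK hx))
    rw [← hS0span]
    apply Submodule.span_mono
    rw [hSdef, Finset.coe_insert]
    exact Set.subset_insert _ _
  set m : ℕ := S.card with hmdef
  have hm : 0 < m := Finset.card_pos.mpr ⟨σ₀, Finset.mem_insert_self _ _⟩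
  have hmC : ((m : ℂ)) ≠ 0 := by exact_mod_cast hm.ne'
  set ρ : PiMat ι d := ((m : ℂ))⁻¹ • ∑ σ ∈ S, σ with hρdef
  have hρJ : ρ ∈ J := J.smul_mem _ (Submodule.sum_mem _ fun σ hσ => (hSK hσ).1)
  have hcast : ((m : ℂ))⁻¹ = (((m : ℝ)⁻¹ : ℝ) : ℂ) := by push_cast; ring
  have hρPos : IsPosEl ρ := by
    rw [hρdef, hcast]
    exact GenChAux.posEl_smul (GenChAux.posEl_sum S fun σ hσ => (hSK (Finset.mem_coe.mpr hσ)).2.1)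
      (by positivity)
  have hρtr : trL ρ = 1 := by
    rw [hρdef, _root_.map_smul, map_sum]
    have h1 : ∀ σ ∈ S, trL σ = 1 := fun σ hσ => (hSK hσ).2.2
    rw [Finset.sum_congr rfl h1, Finset.sum_const, smul_eq_mul, nsmul_eq_mul, mul_one,
      ← hmdef, inv_mul_cancel₀ hmC]
  obtain ⟨p, hpH, hpp, hpρ, hρpp, hδ'⟩ := GenChAux.pimat_support hρPos
  have hcompress : ∀ x : PiMat ι d, compress (fun i => p i) x = (fun i => p i) * x * (fun i => p i) := by
    intro x
    show (LinearMap.mulLeft ℂ _) ((LinearMap.mulRight ℂ _) x) = _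
    rw [LinearMap.mulRight_apply, LinearMap.mulLeft_apply, mul_assoc]
  constructor
  · refine ⟨p, ?_, ?_, ?_⟩
    · show star p = p
      funext i
      show star (p i) = p i
      rw [Matrix.star_eq_conjTranspose]
      exact (hpH i).eq
    · funext i
      exact hpp i
    · apply le_antisymm
      · rw [← hSspan, Submodule.span_le]
        intro σ hσmem
        rw [SetLike.mem_coe, Submodule.mem_inf]
        refine ⟨(hSK hσmem).1, ?_⟩
        have hsumρ : ∑ τ ∈ S, τ = (m : ℂ) • ρ := by
          rw [hρdef, smul_smul, mul_inv_cancel₀ hmC, one_smul]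
        have hcorner : ∀ i, p i * σ i * p i = σ i :=
          GenChAux.compress_fix_of_sum p hpH ρ hpρ S
            (fun τ hτ => (hSK (Finset.mem_coe.mpr hτ)).2.1) σ
            (Finset.mem_coe.mp hσmem) (m : ℂ) hsumρ
        refine ⟨σ, ?_⟩
        rw [hcompress]
        funext i
        exact hcorner i
      · intro a ha
        rw [Submodule.mem_inf] at ha
        obtain ⟨haJ, b, hb⟩ := ha
        rw [hcompress] at hb
        have hap : ∀ i, p i * a i * p i = a i := by
          intro i
          have hai : a i = p i * b i * p i := (congrFun hb i).symm
          rw [hai]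
          have e : p i * (p i * b i * p i) * p i = (p i * p i) * b i * (p i * p i) := by
            noncomm_ring
          rw [e, hpp i]
        exact GenChAux.mem_span_of_compress J hsa ρ p
          hρJ hρPos hρtr hδ' hpH hpp hρpp a haJ hap
  · rintro ⟨ρ₀, hρ₀J, hρ₀pos, hρ₀unit⟩
    apply le_antisymm
    · exact Submodule.span_le.mpr Set.inter_subset_left
    · intro a haJ
      obtain ⟨s, hs0, hstr, hs00⟩ := GenChAux.trL_real_of_posEl hρ₀pos
      have hsne : s ≠ 0 := by
        intro h0
        have hz := hs00 h0
        rw [hz] at hρ₀unit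
        have h01 : (0 : PiMat ι d) = 1 := isUnit_zero_iff.mp hρ₀unit
        have h1 : trL σ₀ = 1 := hσ₀.2.2
        have hσz : σ₀ = 0 := by
          calc σ₀ = σ₀ * 1 := (mul_one _).symm
          _ = σ₀ * 0 := by rw [← h01]
          _ = 0 := mul_zero _
        rw [hσz, map_zero] at h1
        exact zero_ne_one h1
      have hspos : 0 < s := lt_of_le_of_ne hs0 (Ne.symm hsne)
      set ρ₁ : PiMat ι d := ((s⁻¹ : ℝ) : ℂ) • ρ₀ with hρ₁def
      have hρ₁J : ρ₁ ∈ J := J.smul_mem _ hρ₀J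
      have hρ₁Pos : IsPosEl ρ₁ := GenChAux.posEl_smul hρ₀pos (by positivity)
      have hρ₁tr : trL ρ₁ = 1 := by
        rw [hρ₁def, _root_.map_smul, hstr, smul_eq_mul]
        push_cast
        field_simp
        try exact div_self (by exact_mod_cast hsne)
      have hδ1 := GenChAux.unit_support hρ₀pos hρ₀unit (by positivity : (0:ℝ) < s⁻¹)
      refine GenChAux.mem_span_of_compress J hsa ρ₁ 1 hρ₁J hρ₁Pos hρ₁tr hδ1
        (fun i => Matrix.isHermitian_one) (fun i => one_mul _) (fun i => ?_) a haJ (fun i => ?_)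
      · show (1 : PiMat ι d) i * ρ₁ i * (1 : PiMat ι d) i = ρ₁ i
        simp
      · show (1 : PiMat ι d) i * a i * (1 : PiMat ι d) i = a i
        simp


end GenCh
end

section
/- Let A, B be finite-dimensional C*-algebras, K ⊆ S(A) a convex subset, and Φ : A → B a completely positive map with Choi matrix X_Φ ∈ B ⊗ A. Then Tr Φ(a) = 1 for all a ∈ K (i.e. Φ defines a channel on K) if and only if Tr_B X_Φ ∈ I_A + (K^T)^⊥. -/
open scoped BigOperators Pointwise

namespace GenCh

lemma pimat_decomp {ι : Type} [Fintype ι] [DecidableEq ι] {d : ι → Type}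
    [∀ i, Fintype (d i)] [∀ i, DecidableEq (d i)] (a : PiMat ι d) :
    a = ∑ i, ∑ m : d i, ∑ x : d i,
      a i m x • (Pi.single i (Matrix.single m x (1:ℂ)) : PiMat ι d) := by
  funext i'
  ext r c
  simp only [Finset.sum_apply, Matrix.sum_apply, Pi.smul_apply, Matrix.smul_apply]
  rw [Finset.sum_eq_single i']
  · simp only [Pi.single_eq_same]
    rw [Finset.sum_eq_single r, Finset.sum_eq_single c]
    · simp [Matrix.single]
    · intro b _ hb
      rw [Matrix.single_apply_of_ne _ _ _ _ _ (by tauto), smul_zero]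
    · simp
    · intro b _ hb
      rw [Finset.sum_eq_zero]
      intro x _
      rw [Matrix.single_apply_of_ne _ _ _ _ _ (by tauto), smul_zero]
    · simp
  · intro b _ hb
    simp [Pi.single_eq_of_ne' hb]
  · simp

lemma trL_apply_eq {ι : Type} [Fintype ι] [DecidableEq ι] {d : ι → Type}
    [∀ i, Fintype (d i)] [∀ i, DecidableEq (d i)]
    {κ : Type} [Fintype κ] [DecidableEq κ] {e : κ → Type}
    [∀ j, Fintype (e j)] [∀ j, DecidableEq (e j)]
    (Φ : PiMat ι d →ₗ[ℂ] PiMat κ e) (a : PiMat ι d) :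
    trL (Φ a) = ∑ i, ∑ m : d i, ∑ x : d i, a i m x * ptrFst (choi Φ) i m x := by
  conv_lhs => rw [pimat_decomp a]
  rw [map_sum, map_sum]
  simp only [map_sum, map_smul]
  simp only [trL, LinearMap.coe_mk, AddHom.coe_mk, ptrFst, choi, Matrix.trace,
    Matrix.diag, Finset.mul_sum, smul_eq_mul]

lemma herm_of_mem_state {ι : Type} [Fintype ι] [DecidableEq ι] {d : ι → Type}
    [∀ i, Fintype (d i)] [∀ i, DecidableEq (d i)]
    {a : PiMat ι d} (h : IsPosEl a) : star a = a := by
  obtain ⟨b, rfl⟩ := h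
  rw [star_mul, star_star]


lemma key_trace {ι : Type} [Fintype ι] [DecidableEq ι] {d : ι → Type}
    [∀ i, Fintype (d i)] [∀ i, DecidableEq (d i)]
    {κ : Type} [Fintype κ] [DecidableEq κ] {e : κ → Type}
    [∀ j, Fintype (e j)] [∀ j, DecidableEq (e j)]
    (Φ : PiMat ι d →ₗ[ℂ] PiMat κ e) (a : PiMat ι d)
    (hherm : star a = a) (htr : trL a = 1) :
    trL (star (pT a) * (ptrFst (choi Φ) - 1)) = trL (Φ a) - 1 := by
  have hc : ∀ i x m, (starRingEnd ℂ) (a i m x) = a i x m := by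
    intro i x m
    have h := congrFun hherm i
    rw [Pi.star_apply, Matrix.star_eq_conjTranspose] at h
    have := congrFun (congrFun h x) m
    rwa [Matrix.conjTranspose_apply] at this
  have h1 : star (pT a) = pT a := by
    funext i
    ext m x
    rw [Pi.star_apply, Matrix.star_eq_conjTranspose, Matrix.conjTranspose_apply]
    simp only [pT, Matrix.transpose_apply]
    exact hc i x m
  have h2 : trL (pT a) = 1 := by
    simp only [trL, LinearMap.coe_mk, AddHom.coe_mk, pT, Matrix.trace_transpose]
    simpa [trL] using htr
  rw [h1, mul_sub, map_sub, mul_one, h2, trL_apply_eq]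
  congr 1
  simp only [trL, LinearMap.coe_mk, AddHom.coe_mk, Pi.mul_apply, pT,
    Matrix.trace, Matrix.diag, Matrix.mul_apply, Matrix.transpose_apply]
  refine Finset.sum_congr rfl fun i _ => ?_
  exact Finset.sum_comm

/-- A completely positive map `Φ : A → B` defines a channel on a
convex `K ⊆ S(A)` (i.e. `Tr Φ(a) = 1` for all `a ∈ K`) if and only if its Choi
matrix satisfies `Tr_B X_Φ ∈ I_A + (Kᵀ)^⊥`. -/
theorem generalized_channel_iff_choi
    {ι : Type} [Fintype ι] [DecidableEq ι] {d : ι → Type}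
    [∀ i, Fintype (d i)] [∀ i, DecidableEq (d i)]
    {κ : Type} [Fintype κ] [DecidableEq κ] {e : κ → Type}
    [∀ j, Fintype (e j)] [∀ j, DecidableEq (e j)]
    (K : Set (PiMat ι d)) (hK : K ⊆ stateSet ι d) (hconv : Convex ℝ K)
    (Φ : PiMat ι d →ₗ[ℂ] PiMat κ e) (hΦ : IsCP Φ) :
    (∀ a ∈ K, trL (Φ a) = 1) ↔
      ptrFst (choi Φ) - 1 ∈ orthSet (pT '' K) := by
  constructor
  · intro h x hx
    obtain ⟨a, haK, rfl⟩ := hx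
    obtain ⟨hpos, htr⟩ := hK haK
    have hherm := herm_of_mem_state hpos
    rw [key_trace Φ a (herm_of_mem_state hpos) htr, h a haK, sub_self]
  · intro h a haK
    obtain ⟨hpos, htr⟩ := hK haK
    have hherm := herm_of_mem_state hpos
    have := h (pT a) ⟨a, haK, rfl⟩
    rw [key_trace Φ a (herm_of_mem_state hpos) htr] at this
    exact sub_eq_zero.mp this


end GenCh
end

section
/- Let A be a finite-dimensional C*-algebra and J ⊆ A a self-adjoint subspace, and let J̃ = [I_A] ∨ (J^T)^⊥ be the subspace spanned by I_A + (J^T)^⊥. Then: (i) for any state ρ ∈ J, (I_A + (J^T)^⊥) ∩ A⁺ = J̃ ∩ S_{ρ^T}(A); (ii) if I_A ∈ J, then the double tilde satisfies (J̃)̃ = J; (iii) if J = S⁻¹(J₀) for a channel S : A → A₀ and a self-adjoint subspace J₀ ⊆ A₀, then J̃ = (S^T)*(J̃₀). -/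
open scoped BigOperators Pointwise

namespace GenCh

set_option linter.unusedSectionVars false

section HS

variable {ι : Type} [Fintype ι] [DecidableEq ι] {d : ι → Type}
  [∀ i, Fintype (d i)] [∀ i, DecidableEq (d i)]

lemma trL_apply (a : PiMat ι d) : trL a = ∑ i, (a i).trace := rfl

lemma trL_star (a : PiMat ι d) : trL (star a) = starRingEnd ℂ (trL a) := by
  simp only [trL_apply, map_sum]
  exact Finset.sum_congr rfl fun i _ => Matrix.trace_conjTranspose (a i)

lemma inner_self_aux (x : PiMat ι d) :
    trL (star x * x) = ((∑ i, ∑ j, ∑ k, Complex.normSq (x i k j) : ℝ) : ℂ) := by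
  rw [trL_apply]
  push_cast
  refine Finset.sum_congr rfl fun i _ => ?_
  simp only [Matrix.trace, Matrix.diag, Pi.mul_apply, Pi.star_apply,
    Matrix.star_eq_conjTranspose, Matrix.mul_apply, Matrix.conjTranspose_apply]
  refine Finset.sum_congr rfl fun j _ => Finset.sum_congr rfl fun k _ => ?_
  rw [Complex.normSq_eq_conj_mul_self, starRingEnd_apply]

noncomputable def hsCore : InnerProductSpace.Core ℂ (PiMat ι d) where
  inner a b := trL (star a * b)
  conj_inner_symm x y := by
    show starRingEnd ℂ (trL (star y * x)) = trL (star x * y)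
    rw [← trL_star]
    congr 1
    rw [star_mul, star_star]
  re_inner_nonneg x := by
    show 0 ≤ Complex.re (trL (star x * x))
    rw [inner_self_aux, Complex.ofReal_re]
    refine Finset.sum_nonneg fun i _ => Finset.sum_nonneg fun j _ =>
      Finset.sum_nonneg fun k _ => Complex.normSq_nonneg _
  add_left x y z := by
    show trL (star (x + y) * z) = trL (star x * z) + trL (star y * z)
    rw [star_add, add_mul, map_add]
  smul_left x y r := by
    show trL (star (r • x) * y) = starRingEnd ℂ r * trL (star x * y)
    rw [star_smul, smul_mul_assoc, map_smul, starRingEnd_apply]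
    rfl
  definite x h := by
    replace h : trL (star x * x) = 0 := h
    rw [inner_self_aux] at h
    norm_cast at h
    funext i j k
    have h1 := (Finset.sum_eq_zero_iff_of_nonneg (fun i _ => Finset.sum_nonneg fun j _ =>
      Finset.sum_nonneg fun k _ => Complex.normSq_nonneg _)).1 h i (Finset.mem_univ i)
    have h2 := (Finset.sum_eq_zero_iff_of_nonneg (fun j _ =>
      Finset.sum_nonneg fun k _ => Complex.normSq_nonneg _)).1 h1 k (Finset.mem_univ k)
    have h3 := (Finset.sum_eq_zero_iff_of_nonneg (fun k _ =>
      Complex.normSq_nonneg _)).1 h2 j (Finset.mem_univ j)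
    exact Complex.normSq_eq_zero.1 h3

noncomputable instance : NormedAddCommGroup (PiMat ι d) := hsCore.toNormedAddCommGroup

noncomputable instance : InnerProductSpace ℂ (PiMat ι d) := InnerProductSpace.ofCore hsCore.toCore

lemma inner_eq (a b : PiMat ι d) : (inner ℂ a b : ℂ) = trL (star a * b) := rfl

example : FiniteDimensional ℂ (PiMat ι d) := by infer_instance
example (K : Submodule ℂ (PiMat ι d)) : K.HasOrthogonalProjection := by infer_instance

end HS

end GenCh

namespace GenCh

set_option linter.unusedSectionVars false

section Orth

variable {ι : Type} [Fintype ι] [DecidableEq ι] {d : ι → Type}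
  [∀ i, Fintype (d i)] [∀ i, DecidableEq (d i)]
variable {κ : Type} [Fintype κ] [DecidableEq κ] {e : κ → Type}
  [∀ j, Fintype (e j)] [∀ j, DecidableEq (e j)]

lemma mem_orthSet {S : Set (PiMat ι d)} {x : PiMat ι d} :
    x ∈ orthSet S ↔ ∀ a ∈ S, trL (star a * x) = 0 := Iff.rfl

lemma pT_pT (a : PiMat ι d) : pT (pT a) = a := by
  funext i; simp [pT]

lemma pTL_apply (a : PiMat ι d) : pTL a = pT a := rfl

lemma pT_one : pT (1 : PiMat ι d) = 1 := by
  funext i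
  show (Matrix.transpose ((1 : PiMat ι d) i)) = (1 : PiMat ι d) i
  simp only [Pi.one_apply, Matrix.transpose_one]

lemma trL_pT (a : PiMat ι d) : trL (pT a) = trL a := by
  simp only [trL_apply, pT]
  exact Finset.sum_congr rfl fun i _ => Matrix.trace_transpose (a i)

lemma star_pT (a : PiMat ι d) : star (pT a) = pT (star a) := by
  funext i
  show (Matrix.transpose (a i)).conjTranspose = ((a i).conjTranspose).transpose
  ext j k
  simp [Matrix.conjTranspose_apply, Matrix.transpose_apply]

lemma inner_pT (a b : PiMat ι d) : (inner ℂ (pT a) (pT b) : ℂ) = inner ℂ a b := by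
  rw [inner_eq, inner_eq, star_pT, trL_apply, trL_apply]
  refine Finset.sum_congr rfl fun i _ => ?_
  show ((((star a) i).transpose) * ((b i).transpose)).trace = (((star a) i) * (b i)).trace
  rw [← Matrix.transpose_mul, Matrix.trace_transpose, Matrix.trace_mul_comm]

lemma inner_pT_left (a b : PiMat ι d) : (inner ℂ (pT a) b : ℂ) = inner ℂ a (pT b) := by
  rw [← inner_pT a (pT b), pT_pT]

/-- `orthSet` of (the coercion of) a submodule is the orthogonal complement. -/
lemma orthSet_coe (M : Submodule ℂ (PiMat ι d)) :
    orthSet (M : Set (PiMat ι d)) = Mᗮ := by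
  ext x
  rw [mem_orthSet, Submodule.mem_orthogonal]
  rfl

lemma pT_image_coe (M : Submodule ℂ (PiMat ι d)) :
    pT '' (M : Set (PiMat ι d)) = ((Submodule.map pTL M : Submodule ℂ (PiMat ι d)) :
      Set (PiMat ι d)) := by
  ext x
  simp [Submodule.mem_map, pTL_apply]

/-- Generic adjoint-orthogonality lemma. -/
lemma orthogonal_map_eq_comap
    {E F : Type*} [NormedAddCommGroup E] [InnerProductSpace ℂ E]
    [NormedAddCommGroup F] [InnerProductSpace ℂ F]
    (S : E →ₗ[ℂ] F) (T : F →ₗ[ℂ] E)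
    (h : ∀ y x, (inner ℂ (T y) x : ℂ) = inner ℂ y (S x)) (M : Submodule ℂ F) :
    (Submodule.map T M)ᗮ = Submodule.comap S Mᗮ := by
  ext x
  rw [Submodule.mem_orthogonal, Submodule.mem_comap, Submodule.mem_orthogonal]
  constructor
  · intro hx y hy
    rw [← h]
    exact hx _ (Submodule.mem_map_of_mem hy)
  · intro hx u hu
    obtain ⟨y, hy, rfl⟩ := hu
    rw [h]
    exact hx y hy

lemma map_eq_orthogonal_comap
    {E F : Type*} [NormedAddCommGroup E] [InnerProductSpace ℂ E]
    [NormedAddCommGroup F] [InnerProductSpace ℂ F]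
    [FiniteDimensional ℂ E] [FiniteDimensional ℂ F]
    (S : E →ₗ[ℂ] F) (T : F →ₗ[ℂ] E)
    (h : ∀ y x, (inner ℂ (T y) x : ℂ) = inner ℂ y (S x)) (M : Submodule ℂ F) :
    Submodule.map T Mᗮ = (Submodule.comap S M)ᗮ := by
  have := orthogonal_map_eq_comap S T h Mᗮ
  rw [Submodule.orthogonal_orthogonal] at this
  rw [← (Submodule.map T Mᗮ).orthogonal_orthogonal, this]

lemma map_pTL_eq_comap (M : Submodule ℂ (PiMat ι d)) :
    Submodule.map pTL M = Submodule.comap pTL M := by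
  ext x
  rw [Submodule.mem_map, Submodule.mem_comap]
  constructor
  · rintro ⟨y, hy, rfl⟩
    rwa [pTL_apply, pTL_apply, pT_pT]
  · intro hx
    exact ⟨pTL x, hx, by rw [pTL_apply, pTL_apply, pT_pT]⟩

lemma map_pTL_map_pTL (M : Submodule ℂ (PiMat ι d)) :
    Submodule.map pTL (Submodule.map pTL M) = M := by
  rw [map_pTL_eq_comap, map_pTL_eq_comap]
  ext x
  simp only [Submodule.mem_comap, pTL_apply, pT_pT]

lemma pTL_selfadj (y x : PiMat ι d) : (inner ℂ (pTL y) x : ℂ) = inner ℂ y (pTL x) :=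
  inner_pT_left y x

lemma map_pTL_orthogonal (M : Submodule ℂ (PiMat ι d)) :
    Submodule.map pTL Mᗮ = (Submodule.map pTL M)ᗮ := by
  rw [map_eq_orthogonal_comap pTL pTL pTL_selfadj M, map_pTL_eq_comap]

/-- The key reformulation of `tilde`. -/
lemma tilde_eq (J : Submodule ℂ (PiMat ι d)) :
    tilde J = Submodule.span ℂ {(1 : PiMat ι d)} ⊔ Submodule.map pTL Jᗮ := by
  rw [tilde, pT_image_coe, orthSet_coe, ← map_pTL_orthogonal]

end Orth

end GenCh

namespace GenCh



section Main

variable {ι : Type} [Fintype ι] [DecidableEq ι] {d : ι → Type}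
  [∀ i, Fintype (d i)] [∀ i, DecidableEq (d i)]
variable {κ : Type} [Fintype κ] [DecidableEq κ] {e : κ → Type}
  [∀ j, Fintype (e j)] [∀ j, DecidableEq (e j)]

lemma hsIP_eq (a b : PiMat ι d) : hsIP a b = (inner ℂ a b : ℂ) := rfl

lemma inner_one_right (u : PiMat ι d) :
    (inner ℂ u (1 : PiMat ι d) : ℂ) = starRingEnd ℂ (trL u) := by
  rw [inner_eq, mul_one, trL_star]

end Main

set_option linter.unusedVariables false in
/-- properties of `J̃ = [I_A] ∨ (Jᵀ)^⊥`.
(i) For any state `ρ ∈ J`: `(I_A + (Jᵀ)^⊥) ∩ A⁺ = J̃ ∩ S_{ρᵀ}(A)`.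
(ii) If `I_A ∈ J` then `(J̃)̃ = J`.
(iii) If `J = S⁻¹(J₀)` for a channel `S` and a self-adjoint subspace `J₀`, and
`G = (Sᵀ)*` is the Hilbert–Schmidt adjoint of `Sᵀ : a ↦ (S(aᵀ))ᵀ`, then
`J̃ = (Sᵀ)*(J̃₀)`. -/
theorem tilde_properties
    {ι : Type} [Fintype ι] [DecidableEq ι] {d : ι → Type}
    [∀ i, Fintype (d i)] [∀ i, DecidableEq (d i)]
    {κ : Type} [Fintype κ] [DecidableEq κ] {e : κ → Type}
    [∀ j, Fintype (e j)] [∀ j, DecidableEq (e j)]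
    (J : Submodule ℂ (PiMat ι d)) (hsa : ∀ a ∈ J, star a ∈ J)
    (ρ : PiMat ι d)
    (S : PiMat ι d →ₗ[ℂ] PiMat κ e) (J₀ : Submodule ℂ (PiMat κ e))
    (G : PiMat κ e →ₗ[ℂ] PiMat ι d) :
    -- (i)
    ((ρ ∈ J ∧ IsPosEl ρ ∧ trL ρ = 1) →
      {x : PiMat ι d | x - 1 ∈ orthSet (pT '' (J : Set (PiMat ι d)))} ∩ {x | IsPosEl x} =
        (tilde J : Set (PiMat ι d)) ∩ {x | IsPosEl x ∧ trL (pT ρ * x) = 1}) ∧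
    -- (ii)
    ((1 : PiMat ι d) ∈ J → tilde (tilde J) = J) ∧
    -- (iii)
    (IsChannel S → (∀ b ∈ J₀, star b ∈ J₀) →
      (∀ (a : PiMat ι d) (b : PiMat κ e), hsIP (pT (S (pT a))) b = hsIP a (G b)) →
      J = Submodule.comap S J₀ →
      tilde J = Submodule.map G (tilde J₀)) := by
  refine ⟨?_, ?_, ?_⟩
  · -- (i)
    rintro ⟨hρJ, hρpos, hρtr⟩
    have hρstar : star ρ = ρ := by
      obtain ⟨b, hb⟩ := hρpos
      rw [hb, star_mul, star_star]
    have hpTρ : pT ρ ∈ pT '' (J : Set (PiMat ι d)) := ⟨ρ, hρJ, rfl⟩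
    ext x
    simp only [Set.mem_inter_iff, Set.mem_setOf_eq, SetLike.mem_coe]
    constructor
    · rintro ⟨hx1, hx2⟩
      have h0 : trL (star (pT ρ) * (x - 1)) = 0 := hx1 _ hpTρ
      rw [star_pT, hρstar, mul_sub, mul_one, map_sub, sub_eq_zero] at h0
      refine ⟨?_, hx2, by rw [h0, trL_pT, hρtr]⟩
      exact Submodule.mem_sup.2 ⟨1, Submodule.mem_span_singleton_self 1, x - 1, hx1,
        by abel⟩
    · rintro ⟨hx1, hx2, hx3⟩
      obtain ⟨y, hy, z, hz, hyz⟩ := Submodule.mem_sup.1 hx1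
      obtain ⟨c, rfl⟩ := Submodule.mem_span_singleton.1 hy
      have h0 : trL (star (pT ρ) * z) = 0 := hz _ hpTρ
      rw [star_pT, hρstar] at h0
      have hc : c = 1 := by
        rw [← hx3, ← hyz, mul_add, mul_smul_comm, mul_one, map_add, map_smul, h0,
          add_zero, trL_pT, hρtr, smul_eq_mul, mul_one]
      have hxz : x - 1 = z := by
        rw [← hyz, hc, one_smul]
        abel
      exact ⟨hxz ▸ hz, hx2⟩
  · -- (ii)
    intro h1
    have hle : Submodule.span ℂ {(1 : PiMat ι d)} ≤ J :=
      Submodule.span_le.2 (Set.singleton_subset_iff.2 h1)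
    have hspan1 : Submodule.map pTL (Submodule.span ℂ {(1 : PiMat ι d)}) =
        Submodule.span ℂ {(1 : PiMat ι d)} := by
      rw [Submodule.map_span, Set.image_singleton, pTL_apply, pT_one]
    rw [tilde_eq, tilde_eq, ← Submodule.inf_orthogonal, ← map_pTL_orthogonal,
      Submodule.orthogonal_orthogonal, map_pTL_eq_comap, Submodule.comap_inf,
      ← map_pTL_eq_comap, ← map_pTL_eq_comap, map_pTL_map_pTL, map_pTL_orthogonal,
      hspan1, ← sup_inf_assoc_of_le _ hle, Submodule.sup_orthogonal_of_hasOrthogonalProjection,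
      top_inf_eq]
  · -- (iii)
    intro hch _ hG hJ
    have hTP := hch.2
    set T : PiMat κ e →ₗ[ℂ] PiMat ι d := pTL ∘ₗ (G ∘ₗ pTL) with hT
    have hadj : ∀ (y : PiMat κ e) (x : PiMat ι d),
        (inner ℂ (T y) x : ℂ) = inner ℂ y (S x) := by
      intro y x
      have h : (inner ℂ (pT (S x)) (pT y) : ℂ) = inner ℂ (pT x) (G (pT y)) := by
        have := hG (pT x) (pT y)
        rwa [hsIP_eq, hsIP_eq, pT_pT] at this
      calc (inner ℂ (T y) x : ℂ) = inner ℂ (pT (G (pT y))) x := rfl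
        _ = inner ℂ (G (pT y)) (pT x) := inner_pT_left _ _
        _ = starRingEnd ℂ (inner ℂ (pT x) (G (pT y)) : ℂ) := (inner_conj_symm _ _).symm
        _ = starRingEnd ℂ (inner ℂ (pT (S x)) (pT y) : ℂ) := by rw [h]
        _ = inner ℂ (pT y) (pT (S x)) := inner_conj_symm _ _
        _ = inner ℂ y (S x) := inner_pT _ _
    have hG1 : G 1 = 1 := by
      apply ext_inner_left ℂ
      intro v
      have h : (inner ℂ (pT (S (pT v))) (1 : PiMat κ e) : ℂ) = inner ℂ v (G 1) := by
        have := hG v 1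
        rwa [hsIP_eq, hsIP_eq] at this
      calc (inner ℂ v (G 1) : ℂ) = inner ℂ (pT (S (pT v))) (1 : PiMat κ e) := h.symm
        _ = starRingEnd ℂ (trL (pT (S (pT v)))) := inner_one_right _
        _ = starRingEnd ℂ (trL v) := by rw [trL_pT, hTP, trL_pT]
        _ = inner ℂ v (1 : PiMat ι d) := (inner_one_right v).symm
    rw [tilde_eq, tilde_eq, Submodule.map_sup]
    congr 1
    · rw [Submodule.map_span, Set.image_singleton, hG1]
    · rw [hJ, ← map_eq_orthogonal_comap S T hadj J₀]
      have hmap : Submodule.map T (J₀ᗮ) =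
          Submodule.map pTL (Submodule.map G (Submodule.map pTL (J₀ᗮ))) := by
        rw [hT, Submodule.map_comp, Submodule.map_comp]
      rw [hmap, map_pTL_map_pTL]

end GenCh
end
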